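/- Let P be the transition operator of a symmetric, irreducible, finite-range random walk on ℤᵈ, V: ℤᵈ → [0,∞) bounded, λ ∉ σ(P) real, and G_{V,λ} = V^{1/2}(λG_λ - 1)V^{1/2} the modified Birman–Schwinger operator. Then λ ∈ σ_ess(P_V) if and only if 1 ∈ σ_ess(G_{V,λ}), where σ_ess is the Fredholm essential spectrum. -/

import Mathlib

open ContinuousLinearMap

/-- The Hilbert space `ℓ²(ℤᵈ; ℂ)`. -/
noncomputable abbrev L2Z (d : ℕ) := lp (fun _ : Fin d → ℤ => ℂ) 2

/-- `n`-fold convolution power of a transition probability on `ℤᵈ`. -/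
noncomputable def convPow {d : ℕ} (p : (Fin d → ℤ) → ℝ) : ℕ → (Fin d → ℤ) → ℝ
  | 0 => fun x => if x = 0 then 1 else 0
  | n + 1 => fun x => ∑' y : Fin d → ℤ, p (x - y) * convPow p n y

/-- `T` is a Fredholm operator: closed range, finite-dimensional kernel,
and finite-dimensional cokernel. -/
def IsFredholm {X : Type*} [NormedAddCommGroup X] [NormedSpace ℂ X]
    (T : X →L[ℂ] X) : Prop :=
  IsClosed (LinearMap.range (T : X →ₗ[ℂ] X) : Set X) ∧
  FiniteDimensional ℂ (LinearMap.ker (T : X →ₗ[ℂ] X)) ∧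
  FiniteDimensional ℂ (X ⧸ LinearMap.range (T : X →ₗ[ℂ] X))

section Aux

variable {X : Type*} [NormedAddCommGroup X] [NormedSpace ℂ X]

/-- A bounded operator with finite-dimensional cokernel has closed range. -/
theorem aux_closed_range [CompleteSpace X] (T : X →L[ℂ] X)
    (h : FiniteDimensional ℂ (X ⧸ LinearMap.range (T : X →ₗ[ℂ] X))) :
    IsClosed (LinearMap.range (T : X →ₗ[ℂ] X) : Set X) := by
  classical
  set R := LinearMap.range (T : X →ₗ[ℂ] X) with hR
  -- pick a finite-dimensional subspace F mapping onto the quotient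
  obtain ⟨s, hs⟩ := Module.finite_def.mp h
  choose g hg using fun y : (s : Set (X ⧸ R)) => R.mkQ_surjective (y : X ⧸ R)
  set F : Submodule ℂ X := Submodule.span ℂ (Set.range g) with hF
  haveI : FiniteDimensional ℂ F :=
    FiniteDimensional.span_of_finite ℂ (Set.finite_range g)
  have hmap : Submodule.map R.mkQ F = ⊤ := by
    rw [hF, Submodule.map_span, ← Set.range_comp]
    have h1 : (R.mkQ ∘ g) = fun y : (s : Set (X ⧸ R)) => (y : X ⧸ R) :=
      funext fun y => hg y
    rw [h1, Subtype.range_coe, hs]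
  -- the surjective operator X × F → X
  set S : X × F →L[ℂ] X :=
    T.comp (ContinuousLinearMap.fst ℂ X F) +
      F.subtypeL.comp (ContinuousLinearMap.snd ℂ X F) with hS
  have hSapp : ∀ z : X × F, S z = T z.1 + (z.2 : X) := fun z => rfl
  have hsurj : Function.Surjective S := by
    intro y
    have : R.mkQ y ∈ Submodule.map R.mkQ F := hmap ▸ Submodule.mem_top
    obtain ⟨f, hfF, hfy⟩ := this
    have : y - f ∈ R := by
      rw [← Submodule.Quotient.eq]
      exact (hfy.symm : _)
    obtain ⟨x, hx⟩ := this
    exact ⟨(x, ⟨f, hfF⟩), by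
      rw [hSapp]
      simp only [ContinuousLinearMap.coe_coe] at hx ⊢
      rw [show T x = y - f from hx]; abel⟩
  have hq := S.isQuotientMap hsurj
  rw [← hq.isClosed_preimage]
  have hpre : S ⁻¹' (R : Set X) =
      (Set.univ : Set X) ×ˢ (Subtype.val ⁻¹' (R : Set X)) := by
    ext z
    simp only [Set.mem_preimage, Set.mem_prod, Set.mem_univ, true_and]
    rw [hSapp]
    constructor
    · intro hz
      have hT : T z.1 ∈ R := ⟨z.1, rfl⟩
      have := R.sub_mem hz hT
      simpa using this
    · intro hz
      exact R.add_mem ⟨z.1, rfl⟩ hz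
  rw [hpre]
  refine isClosed_univ.prod ?_
  have : (Subtype.val ⁻¹' (R : Set X) : Set F) = ((R.comap F.subtype : Submodule ℂ F) : Set F) := rfl
  rw [this]
  exact Submodule.closed_of_finiteDimensional _

/-- `B` gives a linear equivalence between `ker (1 - AB)` and `ker (1 - BA)`. -/
noncomputable def auxKerEquiv (A B : X →L[ℂ] X) :
    LinearMap.ker ((1 - A ∘L B : X →L[ℂ] X) : X →ₗ[ℂ] X) ≃ₗ[ℂ]
      LinearMap.ker ((1 - B ∘L A : X →L[ℂ] X) : X →ₗ[ℂ] X) := by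
  have hmem : ∀ (A B : X →L[ℂ] X) (x : X),
      x ∈ LinearMap.ker ((1 - A ∘L B : X →L[ℂ] X) : X →ₗ[ℂ] X) ↔ x = A (B x) := by
    intro A B x
    simp [LinearMap.mem_ker, ContinuousLinearMap.sub_apply, sub_eq_zero]
  exact
  { toFun := fun x => ⟨B x.1, by
      rw [hmem]
      have hx := (hmem A B x.1).mp x.2
      conv_lhs => rw [hx]⟩
    map_add' := fun x y => by ext; exact map_add B _ _
    map_smul' := fun c x => by ext; exact map_smul B c _
    invFun := fun y => ⟨A y.1, by
      rw [hmem]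
      have hy := (hmem B A y.1).mp y.2
      conv_lhs => rw [hy]⟩
    left_inv := fun x => by
      ext
      exact ((hmem A B x.1).mp x.2).symm
    right_inv := fun y => by
      ext
      exact ((hmem B A y.1).mp y.2).symm }

/-- `B` induces a linear equivalence between the cokernels of `1 - AB` and `1 - BA`. -/
noncomputable def auxCokerEquiv (A B : X →L[ℂ] X) :
    (X ⧸ LinearMap.range ((1 - A ∘L B : X →L[ℂ] X) : X →ₗ[ℂ] X)) ≃ₗ[ℂ]
      (X ⧸ LinearMap.range ((1 - B ∘L A : X →L[ℂ] X) : X →ₗ[ℂ] X)) := by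
  have key : ∀ A B : X →L[ℂ] X,
      LinearMap.range ((1 - A ∘L B : X →L[ℂ] X) : X →ₗ[ℂ] X) ≤
        Submodule.comap (B : X →ₗ[ℂ] X)
          (LinearMap.range ((1 - B ∘L A : X →L[ℂ] X) : X →ₗ[ℂ] X)) := by
    rintro A B y ⟨x, rfl⟩
    refine ⟨B x, ?_⟩
    simp [ContinuousLinearMap.sub_apply, map_sub]
  refine LinearEquiv.ofLinear
    (Submodule.mapQ _ _ (B : X →ₗ[ℂ] X) (key A B))
    (Submodule.mapQ _ _ (A : X →ₗ[ℂ] X) (key B A)) ?_ ?_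
  · apply Submodule.linearMap_qext
    ext x
    simp only [LinearMap.comp_apply, Submodule.mkQ_apply, Submodule.mapQ_apply,
      LinearMap.id_apply, ContinuousLinearMap.coe_coe]
    rw [Submodule.Quotient.eq]
    refine ⟨-x, ?_⟩
    simp only [ContinuousLinearMap.coe_coe, ContinuousLinearMap.sub_apply,
      ContinuousLinearMap.one_apply, ContinuousLinearMap.comp_apply, map_neg]
    abel
  · apply Submodule.linearMap_qext
    ext x
    simp only [LinearMap.comp_apply, Submodule.mkQ_apply, Submodule.mapQ_apply,
      LinearMap.id_apply, ContinuousLinearMap.coe_coe]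
    rw [Submodule.Quotient.eq]
    refine ⟨-x, ?_⟩
    simp only [ContinuousLinearMap.coe_coe, ContinuousLinearMap.sub_apply,
      ContinuousLinearMap.one_apply, ContinuousLinearMap.comp_apply, map_neg]
    abel

theorem aux_one_sub_comm [CompleteSpace X] (A B : X →L[ℂ] X) :
    _root_.IsFredholm (1 - A ∘L B) → _root_.IsFredholm (1 - B ∘L A) := by
  rintro ⟨-, hker, hcoker⟩
  have hker' : FiniteDimensional ℂ
      (LinearMap.ker ((1 - B ∘L A : X →L[ℂ] X) : X →ₗ[ℂ] X)) :=
    Module.Finite.equiv (auxKerEquiv A B)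
  have hcoker' : FiniteDimensional ℂ
      (X ⧸ LinearMap.range ((1 - B ∘L A : X →L[ℂ] X) : X →ₗ[ℂ] X)) :=
    Module.Finite.equiv (auxCokerEquiv A B)
  exact ⟨aux_closed_range _ hcoker', hker', hcoker'⟩

theorem aux_unit_comp [CompleteSpace X] {U : X →L[ℂ] X} (hU : IsUnit U)
    (T : X →L[ℂ] X) : _root_.IsFredholm (U ∘L T) ↔ _root_.IsFredholm T := by
  set e : X ≃L[ℂ] X := ContinuousLinearEquiv.unitsEquiv ℂ X hU.unit with he
  have hUe : ∀ x, U x = e x := fun x => by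
    rw [he, ContinuousLinearEquiv.unitsEquiv_apply, hU.unit_spec]
  have hinj : Function.Injective (U : X →ₗ[ℂ] X) := by
    intro a b hab
    apply e.injective
    simp only [ContinuousLinearMap.coe_coe] at hab
    rw [← hUe a, ← hUe b, hab]
  have hkereq : LinearMap.ker ((U ∘L T : X →L[ℂ] X) : X →ₗ[ℂ] X)
      = LinearMap.ker (T : X →ₗ[ℂ] X) := by
    rw [ContinuousLinearMap.toLinearMap_comp, LinearMap.ker_comp,
      LinearMap.ker_eq_bot.mpr hinj, Submodule.comap_bot]
  have hrange : LinearMap.range ((U ∘L T : X →L[ℂ] X) : X →ₗ[ℂ] X)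
      = Submodule.map (U : X →ₗ[ℂ] X) (LinearMap.range (T : X →ₗ[ℂ] X)) := by
    rw [ContinuousLinearMap.toLinearMap_comp, LinearMap.range_comp]
  have hset : (LinearMap.range ((U ∘L T : X →L[ℂ] X) : X →ₗ[ℂ] X) : Set X)
      = ⇑e '' (LinearMap.range (T : X →ₗ[ℂ] X) : Set X) := by
    rw [hrange, Submodule.map_coe]
    congr 1
  have hclosed : IsClosed (LinearMap.range ((U ∘L T : X →L[ℂ] X) : X →ₗ[ℂ] X) : Set X)
      ↔ IsClosed (LinearMap.range (T : X →ₗ[ℂ] X) : Set X) := by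
    rw [hset]
    exact e.toHomeomorph.isClosed_image
  have hmapeq : Submodule.map (e.toLinearEquiv : X →ₗ[ℂ] X)
        (LinearMap.range (T : X →ₗ[ℂ] X))
      = LinearMap.range ((U ∘L T : X →L[ℂ] X) : X →ₗ[ℂ] X) := by
    rw [hrange]
    congr 1
  have hq : (X ⧸ LinearMap.range (T : X →ₗ[ℂ] X)) ≃ₗ[ℂ]
      (X ⧸ LinearMap.range ((U ∘L T : X →L[ℂ] X) : X →ₗ[ℂ] X)) :=
    Submodule.Quotient.equiv _ _ e.toLinearEquiv hmapeq
  constructor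
  · rintro ⟨h1, h2, h3⟩
    rw [hkereq] at h2
    rw [hclosed] at h1
    exact ⟨h1, h2, Module.Finite.equiv hq.symm⟩
  · rintro ⟨h1, h2, h3⟩
    exact ⟨hclosed.mpr h1, hkereq ▸ h2, Module.Finite.equiv hq⟩

end Aux

theorem stmt_15 (d : ℕ) (hd : 0 < d) (p : (Fin d → ℤ) → ℝ)
    (hnonneg : ∀ x, 0 ≤ p x) (hsum : HasSum p 1) (hsymm : ∀ x, p (-x) = p x)
    (hfin : (Function.support p).Finite)
    (hirr : ∀ x : Fin d → ℤ, ∃ n : ℕ, 0 < convPow p n x)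
    (V : (Fin d → ℤ) → ℝ) (hV : ∀ x, 0 ≤ V x) (hVbd : ∃ M, ∀ x, V x ≤ M)
    (P PV sqrtV : L2Z d →L[ℂ] L2Z d)
    (hP : ∀ (f : L2Z d) (x : Fin d → ℤ), P f x = ∑' y : Fin d → ℤ, (p (x - y) : ℂ) * f y)
    (hPV : ∀ (f : L2Z d) (x : Fin d → ℤ), PV f x = (1 + V x : ℝ) * P f x)
    (hsqrtV : ∀ (f : L2Z d) (x : Fin d → ℤ), sqrtV f x = (Real.sqrt (V x) : ℂ) * f x)
    (lam : ℝ) (hlam : (lam : ℂ) ∉ spectrum ℂ P)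
    (Glam GVlam : L2Z d →L[ℂ] L2Z d)
    (hGlam : Glam = Ring.inverse ((lam : ℂ) • (1 : L2Z d →L[ℂ] L2Z d) - P))
    (hGVlam : GVlam = sqrtV ∘L ((lam : ℂ) • Glam - 1) ∘L sqrtV) :
    ¬ _root_.IsFredholm ((lam : ℂ) • (1 : L2Z d →L[ℂ] L2Z d) - PV) ↔
      ¬ _root_.IsFredholm (1 - GVlam) := by
  have hunit : IsUnit ((lam : ℂ) • (1 : L2Z d →L[ℂ] L2Z d) - P) := by
    rw [spectrum.notMem_iff] at hlam
    rwa [Algebra.algebraMap_eq_smul_one] at hlam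
  have hinv1 : ((lam : ℂ) • (1 : L2Z d →L[ℂ] L2Z d) - P) * Glam = 1 := by
    rw [hGlam]; exact Ring.mul_inverse_cancel _ hunit
  -- `PV = P + sqrtV ∘L (sqrtV ∘L P)` as operators
  have hop : PV = P + sqrtV ∘L (sqrtV ∘L P) := by
    refine ContinuousLinearMap.ext fun f => lp.ext (funext fun x => ?_)
    have h1 : ((Real.sqrt (V x) : ℂ)) * ((Real.sqrt (V x) : ℂ)) = (V x : ℂ) := by
      rw [← Complex.ofReal_mul, Real.mul_self_sqrt (hV x)]
    have h2 : ((P + sqrtV ∘L (sqrtV ∘L P)) f : L2Z d) x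
        = P f x + sqrtV (sqrtV (P f)) x := by
      rw [ContinuousLinearMap.add_apply, lp.coeFn_add]; rfl
    rw [h2, hPV, hsqrtV, hsqrtV, ← mul_assoc, h1]
    push_cast
    ring
  set A : L2Z d →L[ℂ] L2Z d := Glam ∘L sqrtV with hA
  set B : L2Z d →L[ℂ] L2Z d := sqrtV ∘L P with hB
  have key1 : (lam : ℂ) • (1 : L2Z d →L[ℂ] L2Z d) - PV
      = ((lam : ℂ) • (1 : L2Z d →L[ℂ] L2Z d) - P) ∘L (1 - A ∘L B) := by
    have e2 : ((lam : ℂ) • (1 : L2Z d →L[ℂ] L2Z d) - P) * (A * B)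
        = sqrtV ∘L (sqrtV ∘L P) := by
      have e3 : ((lam : ℂ) • (1 : L2Z d →L[ℂ] L2Z d) - P) * (A * B)
          = (((lam : ℂ) • (1 : L2Z d →L[ℂ] L2Z d) - P) * Glam)
              * (sqrtV * (sqrtV * P)) := by
        show ((lam : ℂ) • (1 : L2Z d →L[ℂ] L2Z d) - P) * ((Glam * sqrtV) * (sqrtV * P)) = _
        noncomm_ring
      rw [e3, hinv1, one_mul]
      rfl
    show _ = ((lam : ℂ) • (1 : L2Z d →L[ℂ] L2Z d) - P) * (1 - A * B)
    rw [mul_sub, mul_one, e2, hop]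
    abel
  have hPG : P * Glam = (lam : ℂ) • Glam - 1 := by
    have h4 := hinv1
    rw [sub_mul, smul_mul_assoc, one_mul] at h4
    rw [← h4]
    abel
  have key2 : (1 : L2Z d →L[ℂ] L2Z d) - GVlam = 1 - B ∘L A := by
    rw [hGVlam, ← hPG]
    congr 1
  rw [key1, key2]
  exact not_congr ((aux_unit_comp hunit _).trans
    ⟨aux_one_sub_comm A B, aux_one_sub_comm B A⟩)
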